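/- Let G be a 3-edge-connected graph with DFS tree T, and let v' be a proper ancestor of v with high(v') = high(v), where both v and v' have proper ancestors with the same M-value (i.e., nextM(v) ≠ ∅ and nextM(v') ≠ ∅). Then nextM(v) is a proper ancestor of lastM(v'); in preorder numbers, nextM(v) < lastM(v'). -/
import Mathlib


variable {V E : Type}

/-- Reachability in the multigraph with edge-endpoint map `ends`,
avoiding (i.e. after deleting) the edges in `S`. -/
def Reach (ends : E → V × V) (S : Set E) : V → V → Prop :=
  Relation.ReflTransGen (fun a b => ∃ e, e ∉ S ∧ (ends e = (a, b) ∨ ends e = (b, a)))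

/-- The multigraph is connected. -/
def Connected (ends : E → V × V) : Prop := ∀ u v : V, Reach ends ∅ u v

/-- `u` and `v` are `k`-edge-connected: no set of at most `k - 1` edges separates them. -/
def KConn (ends : E → V × V) (k : ℕ) (u v : V) : Prop :=
  ∀ S : Finset E, S.card ≤ k - 1 → Reach ends (↑S) u v

/-- The multigraph is `k`-edge-connected: no edge cut of size less than `k`. -/
def GraphKConn (ends : E → V × V) (k : ℕ) : Prop :=
  ∀ S : Finset E, S.card < k → ∀ u v : V, Reach ends (↑S) u v

/-- `S` is an edge cut: removing it disconnects the graph. -/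
def IsCutSet (ends : E → V × V) (S : Set E) : Prop :=
  ∃ u v : V, ¬ Reach ends S u v

/-- A (candidate) DFS tree on the multigraph `ends : E → V × V`: a root, a parent
function, a choice of a tree edge for each non-root vertex, and a preorder numbering. -/
structure DFSTree (V E : Type) where
  ends : E → V × V
  root : V
  parent : V → V
  treeEdge : V → E
  pre : V → ℕ

namespace DFSTree

variable (t : DFSTree V E)

/-- `t.Anc a b` : `a` is an ancestor of `b` (every vertex is an ancestor of itself). -/
def Anc (a b : V) : Prop :=
  Relation.ReflTransGen (fun x y => x ≠ t.root ∧ y = t.parent x) b a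

/-- `a` is a proper ancestor of `b`. -/
def ProperAnc (a b : V) : Prop := t.Anc a b ∧ a ≠ b

def IsTreeEdge (e : E) : Prop := ∃ v, v ≠ t.root ∧ e = t.treeEdge v

/-- The set `B(v)`: back-edges `(x, y)` with `x` a descendant of `v` and `y` a
proper ancestor of `v`. -/
def B (v : V) : Set E :=
  {e | ¬ t.IsTreeEdge e ∧ t.Anc v (t.ends e).1 ∧ t.ProperAnc (t.ends e).2 v}

/-- `m` is the nearest common ancestor of the set `S` of vertices. -/
def IsNCA (S : Set V) (m : V) : Prop :=
  (∀ x ∈ S, t.Anc m x) ∧ ∀ m' : V, (∀ x ∈ S, t.Anc m' x) → t.Anc m' m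

/-- `m = M(v)`: the nearest common ancestor of all lower ends of back-edges in `B(v)`. -/
def IsM (v m : V) : Prop := t.IsNCA {x | ∃ e ∈ t.B v, (t.ends e).1 = x} m

/-- `h = high(v)`: the highest (in preorder) upper end of a back-edge in `B(v)`. -/
def IsHigh (v h : V) : Prop :=
  (∃ e ∈ t.B v, (t.ends e).2 = h) ∧ ∀ e ∈ t.B v, t.pre (t.ends e).2 ≤ t.pre h

/-- `l = low(v)`: the lowest (in preorder) upper end of a back-edge in `B(v)`. -/
def IsLow (v l : V) : Prop :=
  (∃ e ∈ t.B v, (t.ends e).2 = l) ∧ ∀ e ∈ t.B v, t.pre l ≤ t.pre (t.ends e).2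

/-- `v` and `w` have the same `M`-value. -/
def SameM (v w : V) : Prop := ∃ m, t.IsM v m ∧ t.IsM w m

/-- `n = nextM(v)`: the greatest vertex smaller than `v` with the same `M`-value. -/
def IsNextM (v n : V) : Prop :=
  t.pre n < t.pre v ∧ t.SameM v n ∧
    ∀ z, t.pre z < t.pre v → t.SameM v z → t.pre z ≤ t.pre n

/-- `l = lastM(v)`: the smallest vertex with the same `M`-value as `v`. -/
def IsLastM (v l : V) : Prop :=
  t.SameM v l ∧ ∀ z, t.SameM v z → t.pre l ≤ t.pre z

/-- `t` really is a DFS spanning tree of the connected multigraph `ends`. -/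
structure IsDFS : Prop where
  conn : Connected t.ends
  parent_root : t.parent t.root = t.root
  tree_ends : ∀ v, v ≠ t.root → t.ends (t.treeEdge v) = (v, t.parent v)
  treeEdge_inj : ∀ v w, v ≠ t.root → w ≠ t.root → t.treeEdge v = t.treeEdge w → v = w
  back : ∀ e, ¬ t.IsTreeEdge e → t.Anc (t.ends e).2 (t.ends e).1
  pre_inj : Function.Injective t.pre
  pre_mono : ∀ a b, t.Anc a b → t.pre a ≤ t.pre b
  pre_interval : ∀ a b : V,
    t.pre a ≤ t.pre b → t.pre b < t.pre a + {x | t.Anc a x}.ncard → t.Anc a b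

end DFSTree

namespace DFSTree

variable {t : DFSTree V E}

lemma anc_trans {a b c : V} (h1 : t.Anc a b) (h2 : t.Anc b c) : t.Anc a c :=
  Relation.ReflTransGen.trans h2 h1

lemma IsDFS.anc_antisymm (ht : t.IsDFS) {a b : V} (h1 : t.Anc a b) (h2 : t.Anc b a) :
    a = b :=
  ht.pre_inj (le_antisymm (ht.pre_mono a b h1) (ht.pre_mono b a h2))

lemma anc_of_parent {a z : V} (hz : z ≠ t.root) (h : t.Anc a (t.parent z)) : t.Anc a z :=
  Relation.ReflTransGen.head ⟨hz, rfl⟩ h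

lemma anc_cases {a z : V} (h : t.Anc a z) :
    a = z ∨ (z ≠ t.root ∧ t.Anc a (t.parent z)) := by
  rcases Relation.ReflTransGen.cases_head h with h' | ⟨c, ⟨hz, hc⟩, h'⟩
  · exact Or.inl h'.symm
  · exact Or.inr ⟨hz, hc ▸ h'⟩

lemma IsDFS.anc_total (ht : t.IsDFS) {a b : V} :
    ∀ {c : V}, t.Anc a c → t.Anc b c → t.Anc a b ∨ t.Anc b a := by
  intro c h1
  induction h1 using Relation.ReflTransGen.head_induction_on with
  | refl => intro h2; exact Or.inr h2
  | @head c d hstep htail ih =>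
      intro h2
      rcases Relation.ReflTransGen.cases_head h2 with h' | ⟨d', hd', h'⟩
      · subst h'
        exact Or.inl (Relation.ReflTransGen.head hstep htail)
      · have hdd : d' = d := hd'.2.trans hstep.2.symm
        exact ih (hdd ▸ h')

lemma IsDFS.properAnc_of_anc_proper (ht : t.IsDFS) {a b c : V}
    (h1 : t.Anc a b) (h2 : t.ProperAnc b c) : t.ProperAnc a c := by
  refine ⟨anc_trans h1 h2.1, fun hq => ?_⟩
  subst hq
  exact h2.2 (ht.anc_antisymm h2.1 h1)

lemma IsDFS.properAnc_trans (ht : t.IsDFS) {a b c : V}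
    (h1 : t.ProperAnc a b) (h2 : t.ProperAnc b c) : t.ProperAnc a c := by
  refine ⟨anc_trans h1.1 h2.1, fun hq => ?_⟩
  subst hq
  exact h1.2 (ht.anc_antisymm h1.1 h2.1)

lemma isM_anc_self {v m : V} (hm : t.IsM v m) : t.Anc v m := by
  refine hm.2 v ?_
  rintro x ⟨e, he, rfl⟩
  exact he.2.1

lemma IsDFS.isM_unique (ht : t.IsDFS) {v m1 m2 : V}
    (h1 : t.IsM v m1) (h2 : t.IsM v m2) : m1 = m2 :=
  ht.anc_antisymm (h2.2 m1 h1.1) (h1.2 m2 h2.1)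

/-- Key consequence of 3-edge-connectivity: distinct comparable vertices have
distinct `B`-sets (otherwise the two tree edges would form a 2-cut). -/
lemma IsDFS.B_inj (ht : t.IsDFS) (h3 : GraphKConn t.ends 3) {x y : V}
    (hxy : t.ProperAnc x y) (hB : t.B x = t.B y) : False := by
  classical
  -- W is the side of the 2-cut containing x but not y
  set W : V → Prop := fun w => t.Anc x w ∧ ¬ t.Anc y w with hWdef
  have cross : ∀ e : E,
      ((W (t.ends e).1 ∧ ¬ W (t.ends e).2) ∨ (W (t.ends e).2 ∧ ¬ W (t.ends e).1)) →
      e = t.treeEdge x ∨ e = t.treeEdge y := by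
    intro e hor
    by_cases hte : t.IsTreeEdge e
    · obtain ⟨z, hz, rfl⟩ := hte
      rw [ht.tree_ends z hz] at hor
      rcases hor with ⟨⟨hxz, hyz⟩, hp⟩ | ⟨⟨hxp, hyp⟩, hz'⟩
      · -- z ∈ W, parent z ∉ W
        have hnyp : ¬ t.Anc y (t.parent z) := fun hq => hyz (anc_of_parent hz hq)
        have hnxp : ¬ t.Anc x (t.parent z) := fun hq => hp ⟨hq, hnyp⟩
        rcases anc_cases hxz with h' | ⟨_, h'⟩
        · exact Or.inl (by rw [h'])
        · exact absurd h' hnxp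
      · -- parent z ∈ W, z ∉ W
        have hxz : t.Anc x z := anc_of_parent hz hxp
        have hyz : t.Anc y z := by
          by_contra hc
          exact hz' ⟨hxz, hc⟩
        rcases anc_cases hyz with h' | ⟨_, h'⟩
        · exact Or.inr (by rw [h'])
        · exact absurd h' hyp
    · -- back edge
      have hba := ht.back e hte
      exfalso
      rcases hor with ⟨⟨hx1, hy1⟩, h2⟩ | ⟨⟨hx2, hy2⟩, h1⟩
      · -- lower end in W, upper end not in W
        have hny2 : ¬ t.Anc y (t.ends e).2 := fun hq => hy1 (anc_trans hq hba)
        have hnx2 : ¬ t.Anc x (t.ends e).2 := fun hq => h2 ⟨hq, hny2⟩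
        rcases ht.anc_total hba hx1 with h' | h'
        · have heB : e ∈ t.B x :=
            ⟨hte, hx1, h', fun hq => hnx2 (hq ▸ Relation.ReflTransGen.refl)⟩
          have heB' : e ∈ t.B y := hB ▸ heB
          exact hy1 heB'.2.1
        · exact hnx2 h'
      · -- upper end in W, lower end not in W
        have hx1 : t.Anc x (t.ends e).1 := anc_trans hx2 hba
        have hy1 : t.Anc y (t.ends e).1 := by
          by_contra hc
          exact h1 ⟨hx1, hc⟩
        rcases ht.anc_total hba hy1 with h' | h'
        · have heB : e ∈ t.B y :=
            ⟨hte, hy1, h', fun hq => hy2 (hq ▸ Relation.ReflTransGen.refl)⟩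
          have heB' : e ∈ t.B x := hB ▸ heB
          exact heB'.2.2.2 (ht.anc_antisymm heB'.2.2.1 hx2)
        · exact hy2 h'
  set S : Finset E := {t.treeEdge x, t.treeEdge y} with hSdef
  have hcard : S.card < 3 :=
    lt_of_le_of_lt (Finset.card_insert_le _ _) (by simp)
  have hreach : Reach t.ends (↑S) x y := h3 S hcard x y
  have hxW : W x :=
    ⟨Relation.ReflTransGen.refl, fun hq => hxy.2 (ht.anc_antisymm hxy.1 hq)⟩
  have hyW : ¬ W y := fun hq => hq.2 Relation.ReflTransGen.refl
  have key : ∀ w : V, Reach t.ends (↑S) x w → W w := by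
    intro w hw
    induction hw with
    | refl => exact hxW
    | tail hab hbc ih =>
        obtain ⟨e, heS, hor⟩ := hbc
        by_contra hcW
        have hin : e = t.treeEdge x ∨ e = t.treeEdge y := by
          rcases hor with he | he
          · exact cross e (Or.inl ⟨by rw [he]; exact ih, by rw [he]; exact hcW⟩)
          · exact cross e (Or.inr ⟨by rw [he]; exact ih, by rw [he]; exact hcW⟩)
        apply heS
        rcases hin with rfl | rfl
        · simp [hSdef]
        · simp [hSdef]
  exact hyW (key y hreach)

end DFSTree


/-- Let `v'` be a proper ancestor of `v` with `high(v') = high(v)`, where both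
`nextM(v)` and `nextM(v')` are defined. Then `nextM(v)` is a proper ancestor of
`lastM(v')`; in preorder numbers, `nextM(v) < lastM(v')`. -/
theorem nextM_lt_lastM (t : DFSTree V E) (ht : t.IsDFS)
    (h3 : GraphKConn t.ends 3) (v v' h nv lv' : V)
    (hanc : t.ProperAnc v' v)
    (hH : t.IsHigh v h) (hH' : t.IsHigh v' h)
    (hnext : t.IsNextM v nv) (hnext' : ∃ n, t.IsNextM v' n)
    (hlast : t.IsLastM v' lv') :
    t.ProperAnc nv lv' ∧ t.pre nv < t.pre lv' := by
  obtain ⟨hpre_nv, hsame_v, _hmax⟩ := hnext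
  obtain ⟨m, hmv, hmnv⟩ := hsame_v
  obtain ⟨hsame', _hmin⟩ := hlast
  obtain ⟨m', hmv', hmlv'⟩ := hsame'
  have hAncvm : t.Anc v m := DFSTree.isM_anc_self hmv
  have hAncv'm' : t.Anc v' m' := DFSTree.isM_anc_self hmv'
  have hAnc_nv_m : t.Anc nv m := DFSTree.isM_anc_self hmnv
  have hAnc_lv'_m' : t.Anc lv' m' := DFSTree.isM_anc_self hmlv'
  obtain ⟨⟨eh, hehB, heh2⟩, hhmax⟩ := hH
  obtain ⟨⟨eh', heh'B, heh'2⟩, _hhmax'⟩ := hH'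
  have hhv : t.ProperAnc h v := heh2 ▸ hehB.2.2
  have hhv' : t.ProperAnc h v' := heh'2 ▸ heh'B.2.2
  -- upper ends of edges in B v are ancestors of h
  have hupper : ∀ e ∈ t.B v, t.Anc (t.ends e).2 h := by
    intro e he
    rcases ht.anc_total he.2.2.1 hhv.1 with hc | hc
    · exact hc
    · have h1 := ht.pre_mono _ _ hc
      have h2 := hhmax e he
      have heq : h = (t.ends e).2 := ht.pre_inj (le_antisymm h1 h2)
      rw [← heq]
      exact Relation.ReflTransGen.refl
  -- (1) B v ⊆ B v'
  have hBsub : t.B v ⊆ t.B v' := by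
    intro e he
    exact ⟨he.1, DFSTree.anc_trans hanc.1 he.2.1,
      ht.properAnc_of_anc_proper (hupper e he) hhv'⟩
  -- (2) m' is an ancestor of m
  have hm'm : t.Anc m' m := by
    refine hmv.2 m' ?_
    rintro a ⟨e, he, rfl⟩
    exact hmv'.1 _ ⟨e, hBsub he, rfl⟩
  -- (3) m ≠ m'
  have hmm' : m ≠ m' := by
    intro heq
    subst heq
    have hBsub' : t.B v' ⊆ t.B v := by
      intro e he
      refine ⟨he.1, DFSTree.anc_trans hAncvm (hmv'.1 _ ⟨e, he, rfl⟩), ?_⟩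
      exact ht.properAnc_trans he.2.2 hanc
    exact ht.B_inj h3 hanc (Set.Subset.antisymm hBsub' hBsub)
  -- nv is a proper ancestor of v
  have hnvv : t.ProperAnc nv v := by
    rcases ht.anc_total hAnc_nv_m hAncvm with hc | hc
    · exact ⟨hc, fun hq => lt_irrefl _ (hq ▸ hpre_nv)⟩
    · have := ht.pre_mono _ _ hc
      omega
  -- (4) h is not a proper ancestor of nv
  have hhnv : ¬ t.ProperAnc h nv := by
    intro hc
    have hBnv_v : t.B nv ⊆ t.B v := by
      intro e he
      exact ⟨he.1, DFSTree.anc_trans hAncvm (hmnv.1 _ ⟨e, he, rfl⟩),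
        ht.properAnc_trans he.2.2 hnvv⟩
    have hBv_nv : t.B v ⊆ t.B nv := by
      intro e he
      exact ⟨he.1, DFSTree.anc_trans hnvv.1 he.2.1,
        ht.properAnc_of_anc_proper (hupper e he) hc⟩
    exact ht.B_inj h3 hnvv (Set.Subset.antisymm hBnv_v hBv_nv)
  have hnvh : t.Anc nv h := by
    rcases ht.anc_total hnvv.1 hhv.1 with hc | hc
    · exact hc
    · by_cases hq : h = nv
      · rw [hq]
        exact Relation.ReflTransGen.refl
      · exact absurd ⟨hc, hq⟩ hhnv
  have hnvv' : t.ProperAnc nv v' := ht.properAnc_of_anc_proper hnvh hhv'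
  -- the main inequality
  have hgoal : t.pre nv < t.pre lv' := by
    by_contra hc
    push_neg at hc
    have hlv'm : t.Anc lv' m := DFSTree.anc_trans hAnc_lv'_m' hm'm
    have hlnv : t.ProperAnc lv' nv := by
      rcases ht.anc_total hlv'm hAnc_nv_m with h1 | h1
      · refine ⟨h1, fun hq => ?_⟩
        subst hq
        exact hmm' (ht.isM_unique hmnv hmlv')
      · have h2 := ht.pre_mono _ _ h1
        have heq : nv = lv' := ht.pre_inj (le_antisymm h2 hc)
        subst heq
        exact absurd (ht.isM_unique hmnv hmlv') hmm'
    have hsub : t.B lv' ⊆ t.B nv := by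
      intro e he
      refine ⟨he.1, ?_, ht.properAnc_trans he.2.2 hlnv⟩
      exact DFSTree.anc_trans hnvv'.1
        (DFSTree.anc_trans hAncv'm' (hmlv'.1 _ ⟨e, he, rfl⟩))
    have hmm'2 : t.Anc m m' := by
      refine hmlv'.2 m ?_
      rintro a ⟨e, he, rfl⟩
      exact hmnv.1 _ ⟨e, hsub he, rfl⟩
    exact hmm' (ht.anc_antisymm hmm'2 hm'm)
  refine ⟨?_, hgoal⟩
  have hlv'm : t.Anc lv' m := DFSTree.anc_trans hAnc_lv'_m' hm'm
  rcases ht.anc_total hAnc_nv_m hlv'm with h1 | h1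
  · exact ⟨h1, fun hq => lt_irrefl _ (hq ▸ hgoal)⟩
  · have := ht.pre_mono _ _ h1
    omega
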